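/- (Procedure 1 computes a maximizer of the Lagrangian subproblem.) Let λ ∈ ℝ^K satisfy 0 ≤ λ_k ≤ 1 for all k ∈ K. Define b*(λ) ∈ ℝ^E by b*(λ)_ik := (1 − λ_k)·r_ik, define π(λ)_ik := s_i · f_i((1 − λ_k)·r_ik, (1 − λ_k)·r_ik) for all (i,k) ∈ E, and let x*(λ) be any maximizer of x ↦ Σ_{(i,k)∈E} π(λ)_ik · x_ik over S. Then for every x ∈ S and every b ∈ ℝ^E with b ≥ 0, L(x, b, λ) ≤ L(x*(λ), b*(λ), λ); in particular L*(λ) = L(x*(λ), b*(λ), λ). -/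

import Mathlib

open MeasureTheory Finset

variable {I K : Type*}

/-- `fwin μ i a b = ∫ (a − t)·1_{(−∞,b]}(t) dμ_i(t)`: expected utility of bidding `b`
with valuation `a` in a second-price auction against highest competing bid with law `μ i`. -/
noncomputable def fwin (μ : I → Measure ℝ) (i : I) (a b : ℝ) : ℝ :=
  ∫ t in Set.Iic b, (a - t) ∂(μ i)

/-- `rho μ i b = μ_i((−∞,b])`: the probability of winning the auction with bid `b`. -/
noncomputable def rho (μ : I → Measure ℝ) (i : I) (b : ℝ) : ℝ :=
  ((μ i) (Set.Iic b)).toReal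

variable [Fintype I] [Fintype K] [DecidableEq I] [DecidableEq K]

/-- The allocation polytope `S`. -/
def alloc (E : Finset (I × K)) : Set ((I × K) → ℝ) :=
  {x | (∀ e ∈ E, 0 ≤ x e) ∧
    ∀ i : I, ∑ e ∈ E.filter (fun e => e.1 = i), x e ≤ 1}

/-- The profit objective `π(x,b)`. -/
noncomputable def profit (E : Finset (I × K)) (μ : I → Measure ℝ) (s : I → ℝ)
    (r : I × K → ℝ) (x b : (I × K) → ℝ) : ℝ :=
  ∑ e ∈ E, s e.1 * x e * fwin μ e.1 (r e) (b e)

/-- Expected spend of campaign `k`: `Σ_{i ∈ I_k} r_ik · s_i · x_ik · ρ_i(b_ik)`. -/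
noncomputable def spend (E : Finset (I × K)) (μ : I → Measure ℝ) (s : I → ℝ)
    (r : I × K → ℝ) (x b : (I × K) → ℝ) (k : K) : ℝ :=
  ∑ e ∈ E.filter (fun e => e.2 = k), r e * s e.1 * x e * rho μ e.1 (b e)

/-- The Lagrangian `L(x,b,λ)`. -/
noncomputable def Lag (E : Finset (I × K)) (μ : I → Measure ℝ) (s : I → ℝ)
    (r : I × K → ℝ) (m : K → ℝ) (x b : (I × K) → ℝ) (lam : K → ℝ) : ℝ :=
  profit E μ s r x b + ∑ k : K, lam k * (m k - spend E μ s r x b k)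

/-- The dual function `L*(λ) = sup {L(x,b,λ) : x ∈ S, b ≥ 0}`. -/
noncomputable def Lstar (E : Finset (I × K)) (μ : I → Measure ℝ) (s : I → ℝ)
    (r : I × K → ℝ) (m : K → ℝ) (lam : K → ℝ) : ℝ :=
  sSup {v : ℝ | ∃ x b : (I × K) → ℝ,
    x ∈ alloc E ∧ (∀ e ∈ E, 0 ≤ b e) ∧ v = Lag E μ s r m x b lam}


section AuxLemmas

variable {I K : Type*}

/-- Truthful bidding maximizes the winning utility. -/
lemma fwin_le_fwin_self (μ : I → Measure ℝ) (i : I) [IsProbabilityMeasure (μ i)]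
    (hμ : Integrable (fun t => t) (μ i)) (a b : ℝ) :
    fwin μ i a b ≤ fwin μ i a a := by
  have hint : Integrable (fun t => a - t) (μ i) := (integrable_const a).sub hμ
  unfold fwin
  rw [← integral_indicator measurableSet_Iic, ← integral_indicator measurableSet_Iic]
  refine integral_mono (hint.indicator measurableSet_Iic) (hint.indicator measurableSet_Iic)
    fun t => ?_
  by_cases h1 : t ≤ b <;> by_cases h2 : t ≤ a <;>
    simp [Set.indicator, Set.mem_Iic, h1, h2] <;> linarith

lemma fwin_decomp (μ : I → Measure ℝ) (i : I) [IsProbabilityMeasure (μ i)]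
    (hμ : Integrable (fun t => t) (μ i)) (a b : ℝ) :
    fwin μ i a b = a * rho μ i b - ∫ t in Set.Iic b, t ∂(μ i) := by
  unfold fwin rho
  rw [integral_sub (integrable_const a) hμ.restrict, setIntegral_const, smul_eq_mul, mul_comm]
  rfl

variable [Fintype I] [Fintype K] [DecidableEq I] [DecidableEq K]

lemma lag_rearrange (E : Finset (I × K)) (μ : I → Measure ℝ)
    [∀ i, IsProbabilityMeasure (μ i)]
    (hμ : ∀ i, Integrable (fun t => t) (μ i))
    (s : I → ℝ) (r : I × K → ℝ) (m : K → ℝ) (x b : (I × K) → ℝ) (lam : K → ℝ) :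
    Lag E μ s r m x b lam = (∑ k : K, lam k * m k) +
      ∑ e ∈ E, s e.1 * x e * fwin μ e.1 ((1 - lam e.2) * r e) (b e) := by
  have hspend : ∑ k : K, lam k * spend E μ s r x b k
      = ∑ e ∈ E, lam e.2 * (r e * s e.1 * x e * rho μ e.1 (b e)) := by
    rw [← Finset.sum_fiberwise E (fun e => e.2)
      (fun e => lam e.2 * (r e * s e.1 * x e * rho μ e.1 (b e)))]
    refine Finset.sum_congr rfl fun k _ => ?_
    rw [spend, Finset.mul_sum]
    exact Finset.sum_congr rfl fun e he => by
      rw [(Finset.mem_filter.mp he).2]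
  have key : (∑ e ∈ E, s e.1 * x e * fwin μ e.1 (r e) (b e))
      - ∑ e ∈ E, lam e.2 * (r e * s e.1 * x e * rho μ e.1 (b e))
      = ∑ e ∈ E, s e.1 * x e * fwin μ e.1 ((1 - lam e.2) * r e) (b e) := by
    rw [← Finset.sum_sub_distrib]
    refine Finset.sum_congr rfl fun e _ => ?_
    rw [fwin_decomp μ e.1 (hμ e.1), fwin_decomp μ e.1 (hμ e.1)]
    ring
  unfold Lag profit
  simp only [mul_sub, Finset.sum_sub_distrib]
  rw [hspend]
  linarith [key]

end AuxLemmas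

/-- Procedure 1 computes a maximizer of the Lagrangian subproblem: for `0 ≤ λ ≤ 1`,
setting `b*(λ)_ik := (1 − λ_k) r_ik` and letting `x*(λ)` maximize
`x ↦ Σ_{(i,k)∈E} π(λ)_ik x_ik` over `S`, where `π(λ)_ik := s_i f_i((1−λ_k)r_ik, (1−λ_k)r_ik)`,
the pair `(x*(λ), b*(λ))` maximizes `L(·,·,λ)` over `S × {b ≥ 0}`, so `L*(λ)` is attained
there. -/
theorem stmt_7 (E : Finset (I × K)) (μ : I → Measure ℝ)
    [∀ i, IsProbabilityMeasure (μ i)]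
    (hμ : ∀ i, Integrable (fun t => t) (μ i))
    (s : I → ℝ) (hs : ∀ i, 0 ≤ s i)
    (r : I × K → ℝ) (hr : ∀ e ∈ E, 0 ≤ r e)
    (m : K → ℝ)
    (lam : K → ℝ) (hlam : ∀ k, 0 ≤ lam k ∧ lam k ≤ 1)
    (bstar : (I × K) → ℝ) (hbstar : ∀ e : I × K, bstar e = (1 - lam e.2) * r e)
    (xstar : (I × K) → ℝ) (hx1 : xstar ∈ alloc E)
    (hx2 : ∀ x ∈ alloc E,
      ∑ e ∈ E, (s e.1 * fwin μ e.1 ((1 - lam e.2) * r e) ((1 - lam e.2) * r e)) * x e ≤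
      ∑ e ∈ E, (s e.1 * fwin μ e.1 ((1 - lam e.2) * r e) ((1 - lam e.2) * r e)) * xstar e) :
    (∀ x b : (I × K) → ℝ, x ∈ alloc E → (∀ e ∈ E, 0 ≤ b e) →
      Lag E μ s r m x b lam ≤ Lag E μ s r m xstar bstar lam) ∧
    Lstar E μ s r m lam = Lag E μ s r m xstar bstar lam := by
  have hprop : ∀ x b : (I × K) → ℝ, x ∈ alloc E → (∀ e ∈ E, 0 ≤ b e) →
      Lag E μ s r m x b lam ≤ Lag E μ s r m xstar bstar lam := by
    intro x b hx hb
    rw [lag_rearrange E μ hμ s r m x b lam, lag_rearrange E μ hμ s r m xstar bstar lam]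
    have hR : ∑ e ∈ E, s e.1 * xstar e * fwin μ e.1 ((1 - lam e.2) * r e) (bstar e)
        = ∑ e ∈ E, (s e.1 * fwin μ e.1 ((1 - lam e.2) * r e) ((1 - lam e.2) * r e)) * xstar e := by
      refine Finset.sum_congr rfl fun e _ => ?_
      rw [hbstar e]; ring
    rw [hR]
    have step1 : ∑ e ∈ E, s e.1 * x e * fwin μ e.1 ((1 - lam e.2) * r e) (b e)
        ≤ ∑ e ∈ E, (s e.1 * fwin μ e.1 ((1 - lam e.2) * r e) ((1 - lam e.2) * r e)) * x e := by
      refine Finset.sum_le_sum fun e he => ?_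
      have hle := fwin_le_fwin_self μ e.1 (hμ e.1) ((1 - lam e.2) * r e) (b e)
      calc s e.1 * x e * fwin μ e.1 ((1 - lam e.2) * r e) (b e)
          ≤ s e.1 * x e * fwin μ e.1 ((1 - lam e.2) * r e) ((1 - lam e.2) * r e) :=
            mul_le_mul_of_nonneg_left hle (mul_nonneg (hs e.1) (hx.1 e he))
        _ = (s e.1 * fwin μ e.1 ((1 - lam e.2) * r e) ((1 - lam e.2) * r e)) * x e := by ring
    exact add_le_add (le_refl _) (step1.trans (hx2 x hx))
  refine ⟨hprop, ?_⟩
  apply IsGreatest.csSup_eq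
  constructor
  · exact ⟨xstar, bstar, hx1, fun e he => by
      rw [hbstar]
      exact mul_nonneg (by linarith [(hlam e.2).2]) (hr e he), rfl⟩
  · rintro v ⟨x, b, hx, hb, rfl⟩
    exact hprop x b hx hb
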